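/- Let 𝔄 be a Banach algebra and μ ∈ 𝔄*. Define L_μ : 𝔄 → 𝔄*, a ↦ μ·a and R_μ : 𝔄 → 𝔄*, a ↦ a·μ (the module actions ⟨μ·a, b⟩ = ⟨μ, ab⟩, ⟨a·μ, b⟩ = ⟨μ, ba⟩). Then L_μ is weakly compact if and only if R_μ is weakly compact. -/

import Mathlib

open Metric

open NormedSpace in
/-- Every continuous linear functional on the weak-star dual is evaluation at a point. -/
theorem weakDual_functional_eval {X : Type*} [NormedAddCommGroup X] [NormedSpace ℂ X]
    (f : WeakDual ℂ X →L[ℂ] ℂ) :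
    ∃ σ : X, ∀ Φ : WeakDual ℂ X, f Φ = Φ σ := by
  have hb := LinearMap.hasBasis_weakBilin (topDualPairing ℂ X)
  have h0 : f ⁻¹' Metric.ball (0:ℂ) 1 ∈ nhds (0 : WeakDual ℂ X) := by
    have := f.continuous.continuousAt (x := 0)
    have hmem : Metric.ball (0:ℂ) 1 ∈ nhds (f 0) := by
      rw [map_zero]; exact Metric.ball_mem_nhds _ one_pos
    exact this.preimage_mem_nhds hmem
  have h0 := hb.mem_iff.mp h0
  obtain ⟨U, hU, hUf⟩ := h0
  have hU' : U ∈ (topDualPairing ℂ X).toSeminormFamily.basisSets := hU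
  rw [SeminormFamily.basisSets_iff] at hU'
  obtain ⟨s, r, hr, rfl⟩ := hU'
  have hker : ⨅ y : s, LinearMap.ker
        (((topDualPairing ℂ X).flip (y : X)) : WeakDual ℂ X →ₗ[ℂ] ℂ) ≤
      LinearMap.ker (f : WeakDual ℂ X →ₗ[ℂ] ℂ) := by
    intro Φ hΦ
    simp only [Submodule.mem_iInf, LinearMap.mem_ker] at hΦ ⊢
    have hp : (s.sup (topDualPairing ℂ X).toSeminormFamily) Φ = 0 := by
      refine le_antisymm (Seminorm.finset_sup_apply_le le_rfl fun y hy => ?_)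
        (apply_nonneg _ _)
      simp only [LinearMap.toSeminormFamily_apply]
      have := hΦ ⟨y, hy⟩
      simp only [LinearMap.flip_apply] at this
      simp [this]
    by_contra hne
    obtain ⟨n, hn'⟩ := exists_nat_gt (1 / ‖f Φ‖)
    have hball : ((n : ℂ) • Φ) ∈ (s.sup (topDualPairing ℂ X).toSeminormFamily).ball 0 r := by
      rw [Seminorm.mem_ball_zero, map_smul_eq_mul, hp, mul_zero]; exact hr
    have h1 : ‖(n : ℂ) • f Φ‖ < 1 := by
      have := mem_ball_zero_iff.mp (hUf hball)
      have e : f ((n : ℂ) • (Φ : WeakDual ℂ X)) = (n : ℂ) • f Φ := f.map_smul _ _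
      rw [← e]; exact this
    rw [norm_smul, Complex.norm_natCast] at h1
    have hfp : 0 < ‖f Φ‖ := norm_pos_iff.mpr hne
    rw [div_lt_iff₀ hfp] at hn'
    linarith
  have hsp := mem_span_of_iInf_ker_le_ker
    (L := fun y : s => (((topDualPairing ℂ X).flip (y : X)) : WeakDual ℂ X →ₗ[ℂ] ℂ))
    (K := (f : WeakDual ℂ X →ₗ[ℂ] ℂ)) hker
  obtain ⟨c, hc⟩ := (Submodule.mem_span_range_iff_exists_fun ℂ).1 hsp
  refine ⟨∑ y : s, c y • (y : X), fun Φ => ?_⟩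
  have := congrArg (fun g : WeakDual ℂ X →ₗ[ℂ] ℂ => g Φ) hc
  simp only [LinearMap.coe_sum, Finset.sum_apply, LinearMap.smul_apply,
    LinearMap.flip_apply, ContinuousLinearMap.coe_coe] at this
  rw [← this, map_sum]
  simp only [map_smul, smul_eq_mul]
  exact (LinearMap.sum_apply (M := X →L[ℂ] ℂ) _ _ Φ).trans (Finset.sum_congr rfl fun x _ => rfl)

noncomputable instance (Y : Type*) [NormedAddCommGroup Y] [NormedSpace ℂ Y] :
    IsScalarTower ℝ ℂ (WeakDual ℂ Y) :=
  WeakBilin.instIsScalarTower (topDualPairing ℂ Y)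

noncomputable instance (Y : Type*) [NormedAddCommGroup Y] [NormedSpace ℂ Y] :
    LocallyConvexSpace ℝ (WeakDual ℂ Y) :=
  WeakBilin.locallyConvexSpace (𝕜 := ℂ) (B := topDualPairing ℂ Y)

open NormedSpace in
/-- **Goldstine's theorem**: the image of the closed unit ball of a normed space is weak-star
dense in the closed unit ball of its bidual. -/
theorem goldstine {X : Type*} [NormedAddCommGroup X] [NormedSpace ℂ X]
    {Ψ : StrongDual ℂ (StrongDual ℂ X)} (hΨ : ‖Ψ‖ ≤ 1) :
    (StrongDual.toWeakDual Ψ : WeakDual ℂ (StrongDual ℂ X)) ∈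
      closure (StrongDual.toWeakDual '' (inclusionInDoubleDual ℂ X '' closedBall (0 : X) 1)) := by
  set κ := inclusionInDoubleDual ℂ X with hκ
  set K := closure ((StrongDual.toWeakDual (E := StrongDual ℂ X)) '' (κ '' closedBall (0 : X) 1)) with hKdef
  by_contra hmem
  have hconv : Convex ℝ K := by
    refine Convex.closure (𝕜 := ℝ) (E := WeakDual ℂ (StrongDual ℂ X)) ?_
    have h1 : Convex ℝ (closedBall (0 : X) 1) := convex_closedBall _ _
    have h2 := h1.linear_image ((κ.restrictScalars ℝ).toLinearMap)
    exact h2.linear_image ((StrongDual.toWeakDual (E := StrongDual ℂ X)).restrictScalars ℝ).toLinearMap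
  obtain ⟨f, u, hfK, hfΨ⟩ := RCLike.geometric_hahn_banach_closed_point (𝕜 := ℂ)
    hconv isClosed_closure hmem
  obtain ⟨σ, hσ⟩ := weakDual_functional_eval f
  have h0K : (StrongDual.toWeakDual (κ 0) : WeakDual ℂ (StrongDual ℂ X)) ∈ K :=
    subset_closure ⟨κ 0, ⟨0, mem_closedBall_self zero_le_one, rfl⟩, rfl⟩
  have hu0 : 0 < u := by
    have := hfK _ h0K
    rwa [hσ, map_zero]  at this
  have hball : ∀ a : X, ‖a‖ ≤ 1 → ‖σ a‖ < u := by
    intro a ha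
    rcases eq_or_ne (σ a) 0 with h | h
    · simpa [h] using hu0
    · set c : ℂ := (‖σ a‖ : ℂ) / σ a with hc
      have hcnorm : ‖c‖ = 1 := by
        rw [hc, norm_div, Complex.norm_real, norm_norm]
        exact div_self (norm_ne_zero_iff.mpr h)
      have hca : ‖c • a‖ ≤ 1 := by rw [norm_smul, hcnorm, one_mul]; exact ha
      have hmem' : (StrongDual.toWeakDual (κ (c • a)) : WeakDual ℂ (StrongDual ℂ X)) ∈ K :=
        subset_closure ⟨κ (c • a), ⟨c • a, mem_closedBall_zero_iff.mpr hca, rfl⟩, rfl⟩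
      have := hfK _ hmem'
      rw [hσ] at this
      have hval : (κ (c • a)) σ = (‖σ a‖ : ℂ) := by
        simp only [hκ, ContinuousLinearMap.smul_apply, dual_def, map_smul, smul_eq_mul, hc]
        field_simp
      have hval' : ((StrongDual.toWeakDual (κ (c • a)) : WeakDual ℂ (StrongDual ℂ X)) σ)
          = (‖σ a‖ : ℂ) := hval
      rw [hval'] at this
      simpa using this
  have hσnorm : ‖σ‖ ≤ u := by
    refine ContinuousLinearMap.opNorm_le_bound σ hu0.le fun x => ?_
    rcases eq_or_ne x 0 with rfl | hx
    · simp
    · have hxn : (0:ℝ) < ‖x‖ := norm_pos_iff.mpr hx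
      have := (hball (‖x‖⁻¹ • x) (by rw [norm_smul, norm_inv, norm_norm,
        inv_mul_cancel₀ hxn.ne'])).le
      rw [σ.map_smul_of_tower, norm_smul, Real.norm_eq_abs, abs_inv, abs_norm] at this
      calc ‖σ x‖ = ‖x‖ * (‖x‖⁻¹ * ‖σ x‖) := by field_simp
        _ ≤ ‖x‖ * u := by
            exact mul_le_mul_of_nonneg_left (by simpa using this) hxn.le
        _ = u * ‖x‖ := mul_comm _ _
  have hfinal : Complex.re (f (StrongDual.toWeakDual Ψ)) ≤ u := by
    rw [hσ]
    have h1 : Complex.re (Ψ σ) ≤ ‖Ψ σ‖ := Complex.re_le_norm _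
    have h2 : ‖Ψ σ‖ ≤ ‖Ψ‖ * ‖σ‖ := Ψ.le_opNorm σ
    have h3 : ‖Ψ‖ * ‖σ‖ ≤ 1 * u :=
      mul_le_mul hΨ hσnorm (norm_nonneg _) zero_le_one
    calc Complex.re ((StrongDual.toWeakDual Ψ) σ) = Complex.re (Ψ σ) := rfl
      _ ≤ u := by linarith
  exact absurd hfΨ (not_lt.mpr hfinal)

/-- A bounded linear map between normed spaces is weakly compact if the image of the
closed unit ball is relatively compact in the weak topology of the codomain. -/
def IsWeaklyCompactMap {E F : Type*} [NormedAddCommGroup E] [NormedSpace ℂ E]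
    [NormedAddCommGroup F] [NormedSpace ℂ F] (T : E → F) : Prop :=
  IsCompact (closure ((toWeakSpace ℂ F) '' (T '' closedBall (0 : E) 1)))

open NormedSpace in
/-- The weak topology on a normed space over `ℂ` is Hausdorff. -/
theorem t2space_weakSpace (Y : Type*) [NormedAddCommGroup Y] [NormedSpace ℂ Y] :
    T2Space (WeakSpace ℂ Y) := by
  have hinj : Function.Injective ((topDualPairing ℂ Y).flip) := by
    intro x y hxy
    have h : ∀ f : StrongDual ℂ Y, f x = f y := fun f => congrArg (fun g => g f) hxy
    have := (inclusionInDoubleDualLi ℂ (E := Y)).injective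
    apply this
    ext f
    exact h f
  exact (WeakBilin.isEmbedding hinj).t2Space

section Core

open NormedSpace

variable {E : Type*} [NormedAddCommGroup E] [NormedSpace ℂ E]

local notation "D" => StrongDual ℂ E

set_option maxHeartbeats 1000000 in
/-- The key one-directional statement: if `L` is weakly compact then so is its "flip".
This is proved via Goldstine's theorem and (one direction of) Gantmacher's theorem. -/
theorem IsWeaklyCompactMap.flip_clm (L R : E →L[ℂ] (E →L[ℂ] ℂ)) (h : ∀ a b : E, R a b = L b a)
    (hw : IsWeaklyCompactMap (L : E → (E →L[ℂ] ℂ))) :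
    IsWeaklyCompactMap (R : E → (E →L[ℂ] ℂ)) := by
  classical
  set κE := inclusionInDoubleDual ℂ E with hκE
  set κD := inclusionInDoubleDual ℂ D with hκD
  -- the adjoint (precomposition) map
  set M : StrongDual ℂ D →L[ℂ] D := (ContinuousLinearMap.compL ℂ E D ℂ).flip L with hM
  have hMapp : ∀ (Ψ : StrongDual ℂ D) (b : E), M Ψ b = Ψ (L b) := fun Ψ b => rfl
  have hMκ : ∀ a : E, M (κE a) = R a := by
    intro a; ext b
    rw [hMapp, dual_def, h]
  -- the compact set from `hw`
  set C := closure ((toWeakSpace ℂ D) '' ((L : E → D) '' closedBall (0 : E) 1)) with hC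
  have hCcomp : IsCompact C := hw
  -- the embedding ι of the weak space into the weak-star bidual
  set ι : WeakSpace ℂ D → WeakDual ℂ (StrongDual ℂ D) :=
    fun σ => StrongDual.toWeakDual (κD ((toWeakSpace ℂ D).symm σ)) with hι
  have hιcont : Continuous ι := by
    apply WeakDual.continuous_of_continuous_eval
    intro Φ
    exact WeakBilin.eval_continuous ((topDualPairing ℂ D).flip) Φ
  have hιC : IsClosed (ι '' C) := by
    have : T2Space (WeakDual ℂ (StrongDual ℂ D)) := inferInstance
    exact (hCcomp.image hιcont).isClosed
  -- the map G (the double adjoint of L)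
  set G : WeakDual ℂ D → WeakDual ℂ (StrongDual ℂ D) :=
    fun Ψ => StrongDual.toWeakDual ((WeakDual.toStrongDual Ψ).comp M) with hG
  have hGcont : Continuous G := by
    apply WeakDual.continuous_of_continuous_eval
    intro Φ
    exact WeakDual.eval_continuous (M Φ)
  have hGκ : ∀ a : E, G (StrongDual.toWeakDual (κE a)) = ι (toWeakSpace ℂ D (L a)) := by
    intro a
    apply (WeakDual.toStrongDual_inj _ _).mp
    ext Φ
    show (κE a) (M Φ) = (κD (L a)) Φ
    rw [dual_def, dual_def, hMapp]
  -- Gantmacher: the functional `Φ ↦ Ψ (M Φ)` is evaluation at a point of `D`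
  have key : ∀ Ψ : StrongDual ℂ D, ∃ σ : D, ∀ Φ : StrongDual ℂ D, Ψ (M Φ) = Φ σ := by
    have key1 : ∀ Ψ : StrongDual ℂ D, ‖Ψ‖ ≤ 1 → ∃ σ : D, ∀ Φ : StrongDual ℂ D, Ψ (M Φ) = Φ σ := by
      intro Ψ hΨ
      have hgold := goldstine (X := E) hΨ
      have hmem : G (StrongDual.toWeakDual Ψ) ∈
          closure (G '' (StrongDual.toWeakDual '' (κE '' closedBall (0 : E) 1))) :=
        (image_closure_subset_closure_image hGcont) ⟨_, hgold, rfl⟩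
      have hsub : G '' (StrongDual.toWeakDual '' (κE '' closedBall (0 : E) 1)) ⊆ ι '' C := by
        rintro - ⟨-, ⟨-, ⟨a, ha, rfl⟩, rfl⟩, rfl⟩
        exact ⟨toWeakSpace ℂ D (L a),
          subset_closure ⟨L a, ⟨a, ha, rfl⟩, rfl⟩, (hGκ a).symm⟩
      have := closure_minimal hsub hιC hmem
      obtain ⟨σ', hσ'C, hσ'⟩ := this
      refine ⟨(toWeakSpace ℂ D).symm σ', fun Φ => ?_⟩
      have := congrArg (fun g => WeakDual.toStrongDual g Φ) hσ'
      simpa [hι, hG, hκD, dual_def] using this.symm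
    intro Ψ
    rcases eq_or_ne Ψ 0 with rfl | hne
    · exact ⟨0, fun Φ => by simp⟩
    · have hn : (0:ℝ) < ‖Ψ‖ := (norm_pos_iff (a := Ψ)).mpr hne
      obtain ⟨σ₁, hσ₁⟩ := key1 (‖Ψ‖⁻¹ • Ψ)
        (by
          haveI : NormSMulClass ℝ (StrongDual ℂ D) :=
            @NormedSpace.toNormSMulClass _ _ _ _ ContinuousLinearMap.toNormedSpace
          rw [norm_smul, norm_inv, norm_norm (E := StrongDual ℂ D), inv_mul_cancel₀ hn.ne'])
      refine ⟨‖Ψ‖ • σ₁, fun Φ => ?_⟩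
      have := hσ₁ Φ
      rw [ContinuousLinearMap.smul_apply] at this
      rw [Φ.map_smul_of_tower]
      rw [← this]
      rw [smul_smul]
      rw [mul_inv_cancel₀ hn.ne', one_smul]
  choose sig hsig using key
  -- the continuous map from the weak-star dual to the weak space
  set f : WeakDual ℂ D → WeakSpace ℂ D :=
    fun Φ => toWeakSpace ℂ D (M (WeakDual.toStrongDual Φ)) with hf
  have hfcont : Continuous f := by
    apply WeakBilin.continuous_of_continuous_eval
    intro Ψ
    have : (fun Φ : WeakDual ℂ D => ((topDualPairing ℂ D).flip) (f Φ) Ψ)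
        = fun Φ : WeakDual ℂ D => Φ (sig Ψ) := by
      funext Φ
      exact hsig Ψ (WeakDual.toStrongDual Φ)
    rw [this]
    exact WeakDual.eval_continuous (sig Ψ)
  -- the compact superset supplied by the Banach–Alaoglu theorem
  have hball : IsCompact (WeakDual.toStrongDual ⁻¹'
      closedBall (0 : StrongDual ℂ D) 1) := WeakDual.isCompact_closedBall (𝕜 := ℂ) (E := D) 0 1
  have hK : IsCompact (f '' (WeakDual.toStrongDual ⁻¹' closedBall (0 : StrongDual ℂ D) 1)) :=
    hball.image hfcont
  have hsub2 : (toWeakSpace ℂ D) '' ((R : E → D) '' closedBall (0 : E) 1) ⊆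
      f '' (WeakDual.toStrongDual ⁻¹' closedBall (0 : StrongDual ℂ D) 1) := by
    rintro - ⟨-, ⟨a, ha, rfl⟩, rfl⟩
    refine ⟨StrongDual.toWeakDual (κE a), ?_, ?_⟩
    · simp only [Set.mem_preimage, StrongDual.toStrongDual_toWeakDual, mem_closedBall_zero_iff]
      apply (mem_closedBall_zero_iff (E := StrongDual ℂ D)).mpr
      calc ‖κE a‖ ≤ ‖a‖ := double_dual_bound ℂ E a
        _ ≤ 1 := mem_closedBall_zero_iff.mp ha
    · show toWeakSpace ℂ D (M (κE a)) = toWeakSpace ℂ D (R a)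
      rw [hMκ]
  have : T2Space (WeakSpace ℂ D) := t2space_weakSpace D
  exact hK.of_isClosed_subset isClosed_closure
    (closure_minimal hsub2 hK.isClosed)

end Core

/-- Let `𝔄` be a Banach algebra and `μ ∈ 𝔄*`.  With the module maps
`L_μ : a ↦ μ·a` (`⟨μ·a, b⟩ = μ(ab)`) and `R_μ : a ↦ a·μ` (`⟨a·μ, b⟩ = μ(ba)`),
`L_μ` is weakly compact if and only if `R_μ` is weakly compact. -/
theorem weakly_compact_left_iff_right
    {𝔄 : Type*} [NormedRing 𝔄] [NormedAlgebra ℂ 𝔄] [CompleteSpace 𝔄]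
    (μ : 𝔄 →L[ℂ] ℂ)
    (L R : 𝔄 →L[ℂ] (𝔄 →L[ℂ] ℂ))
    (hL : ∀ a b : 𝔄, L a b = μ (a * b))
    (hR : ∀ a b : 𝔄, R a b = μ (b * a)) :
    IsWeaklyCompactMap (L : 𝔄 → (𝔄 →L[ℂ] ℂ)) ↔ IsWeaklyCompactMap (R : 𝔄 → (𝔄 →L[ℂ] ℂ)) := by
  constructor
  · intro hw
    exact IsWeaklyCompactMap.flip_clm L R (fun a b => by rw [hR a b, hL b a]) hw
  · intro hw
    exact IsWeaklyCompactMap.flip_clm R L (fun a b => by rw [hL a b, hR b a]) hw
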